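/- Let A = a₀·I + a·σ, B = b₀·I + b·σ, C = c₀·I + c·σ be qubit observables with {a,b,c} linearly independent in ℝ³. Then the uncertainty region {(Δ_ρA, Δ_ρB, Δ_ρC) : ρ a qubit density matrix} ⊆ ℝ³_{≥0} equals the union over the four sign choices ε_b, ε_c ∈ {+1,−1} of the sets { (x,y,z) : x ∈ [0,|a|], y ∈ [0,|b|], z ∈ [0,|c|], and u·T_{a,b,c}⁻¹·uᵀ ≤ 1 }, where u = u_{ε_b,ε_c}(x,y,z) = (√(|a|²−x²), ε_b·√(|b|²−y²), ε_c·√(|c|²−z²)) is viewed as a row vector in ℝ³. -/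

import Mathlib

open Matrix MeasureTheory Filter Set
open scoped RealInnerProductSpace Kronecker ComplexOrder

noncomputable section

/-- ℝ³ with the Euclidean norm and inner product. -/
abbrev E3 : Type := EuclideanSpace ℝ (Fin 3)

/-- The Pauli matrices. -/
def pauli1 : Matrix (Fin 2) (Fin 2) ℂ := !![0, 1; 1, 0]
def pauli2 : Matrix (Fin 2) (Fin 2) ℂ := !![0, -Complex.I; Complex.I, 0]
def pauli3 : Matrix (Fin 2) (Fin 2) ℂ := !![1, 0; 0, -1]

/-- The qubit observable `a₀·I + a·σ`. -/
def qObs (a0 : ℝ) (a : E3) : Matrix (Fin 2) (Fin 2) ℂ :=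
  (a0 : ℂ) • (1 : Matrix (Fin 2) (Fin 2) ℂ)
    + (a 0 : ℂ) • pauli1 + (a 1 : ℂ) • pauli2 + (a 2 : ℂ) • pauli3

/-- A density matrix: positive semidefinite with trace one. -/
def IsDensityMatrix {n : Type*} [Fintype n] (ρ : Matrix n n ℂ) : Prop :=
  ρ.PosSemidef ∧ ρ.trace = 1

/-- Mean value `⟨M⟩_ρ = Tr(Mρ)` of an observable `M` in the state `ρ`. -/
def mean {n : Type*} [Fintype n] (M ρ : Matrix n n ℂ) : ℝ :=
  (Matrix.trace (M * ρ)).re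

/-- Variance `(Δ_ρ M)² = Tr(M²ρ) − (Tr(Mρ))²`. -/
def variance {n : Type*} [Fintype n] (M ρ : Matrix n n ℂ) : ℝ :=
  (Matrix.trace (M * M * ρ)).re - (mean M ρ) ^ 2

/-- Uncertainty `Δ_ρ M` (standard deviation). -/
def uncertainty {n : Type*} [Fintype n] (M ρ : Matrix n n ℂ) : ℝ :=
  Real.sqrt (variance M ρ)

/-- Gram matrix of a tuple of vectors in ℝ³. -/
def gram {m : ℕ} (v : Fin m → E3) : Matrix (Fin m) (Fin m) ℝ :=
  Matrix.of fun i j => (inner ℝ (v i) (v j) : ℝ)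

lemma gram_isHermitian {m : ℕ} (v : Fin m → E3) : (gram v).IsHermitian := by
  ext i j
  simp [_root_.gram, Matrix.conjTranspose_apply, mul_comm, real_inner_comm]

/-- Smallest eigenvalue of the Gram matrix. -/
def lamMin {m : ℕ} (v : Fin m → E3) : ℝ := ⨅ i, (gram_isHermitian v).eigenvalues i

/-- Largest eigenvalue of the Gram matrix. -/
def lamMax {m : ℕ} (v : Fin m → E3) : ℝ := ⨆ i, (gram_isHermitian v).eigenvalues i

/-! ### Auxiliary machinery for the proof -/

/-- The Bloch-parametrized state `(I + r·σ)/2`. -/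
def rho (r : Fin 3 → ℝ) : Matrix (Fin 2) (Fin 2) ℂ :=
  !![(1 + r 2)/2, (r 0 - r 1 * Complex.I)/2; (r 0 + r 1 * Complex.I)/2, (1 - r 2)/2]

lemma rho_herm (r : Fin 3 → ℝ) : (rho r).IsHermitian := by
  ext i j
  fin_cases i <;> fin_cases j <;>
    simp [rho, Matrix.conjTranspose_apply, Complex.ext_iff]

lemma rho_trace (r : Fin 3 → ℝ) : (rho r).trace = 1 := by
  simp [rho, Matrix.trace_fin_two, Complex.ext_iff]
  ring

set_option maxHeartbeats 1000000 in
lemma rho_psd (r : Fin 3 → ℝ) (h : r 0 ^ 2 + r 1 ^ 2 + r 2 ^ 2 ≤ 1) : (rho r).PosSemidef := by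
  refine Matrix.PosSemidef.of_dotProduct_mulVec_nonneg (rho_herm r) fun x => ?_
  rw [Complex.le_def]
  set p := (x 0).re with hp; set q := (x 0).im with hq
  set s := (x 1).re with hs; set t := (x 1).im with ht
  have hmv : (rho r).mulVec x = ![((1 + r 2)/2) * x 0 + ((r 0 - r 1 * Complex.I)/2) * x 1,
      ((r 0 + r 1 * Complex.I)/2) * x 0 + ((1 - r 2)/2) * x 1] := by
    funext i; fin_cases i <;>
      simp [rho, Matrix.mulVec, dotProduct, Fin.sum_univ_two]
  have hdp : star x ⬝ᵥ (rho r).mulVec x =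
      (starRingEnd ℂ) (x 0) * (((1 + r 2)/2) * x 0 + ((r 0 - r 1 * Complex.I)/2) * x 1)
      + (starRingEnd ℂ) (x 1) * (((r 0 + r 1 * Complex.I)/2) * x 0 + ((1 - r 2)/2) * x 1) := by
    rw [hmv]; simp [dotProduct, Fin.sum_univ_two]
  rw [hdp]
  constructor
  · simp only [Complex.add_re, Complex.mul_re, Complex.mul_im, Complex.add_im,
      Complex.sub_re, Complex.sub_im, Complex.div_re, Complex.div_im, Complex.I_re,
      Complex.I_im, Complex.ofReal_re, Complex.ofReal_im, Complex.one_re, Complex.one_im,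
      Complex.conj_re, Complex.conj_im, Complex.normSq, MonoidWithZeroHom.coe_mk,
      Complex.re_ofNat, Complex.im_ofNat,
      ZeroHom.coe_mk, Complex.zero_re, ← hp, ← hq, ← hs, ← ht]
    have cs : (r 0 * (2*(p*s+q*t)) + r 1 * (2*(p*t-q*s)) + r 2 * ((p^2+q^2)-(s^2+t^2)))^2
        ≤ (r 0^2 + r 1^2 + r 2^2) * ((p^2+q^2+s^2+t^2)^2) := by
      nlinarith [sq_nonneg (r 0 * (2*(p*t-q*s)) - r 1 * (2*(p*s+q*t))),
        sq_nonneg (r 0 * ((p^2+q^2)-(s^2+t^2)) - r 2 * (2*(p*s+q*t))),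
        sq_nonneg (r 1 * ((p^2+q^2)-(s^2+t^2)) - r 2 * (2*(p*t-q*s)))]
    nlinarith [sq_nonneg (p^2+q^2+s^2+t^2), sq_nonneg (p^2+q^2+s^2+t^2 + (r 0 * (2*(p*s+q*t)) + r 1 * (2*(p*t-q*s)) + r 2 * ((p^2+q^2)-(s^2+t^2))))]
  · simp only [Complex.add_im, Complex.mul_re, Complex.mul_im, Complex.add_re,
      Complex.sub_re, Complex.sub_im, Complex.div_re, Complex.div_im, Complex.I_re,
      Complex.I_im, Complex.ofReal_re, Complex.ofReal_im, Complex.one_re, Complex.one_im,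
      Complex.conj_re, Complex.conj_im, Complex.normSq, MonoidWithZeroHom.coe_mk,
      Complex.re_ofNat, Complex.im_ofNat,
      ZeroHom.coe_mk, Complex.zero_im]
    ring

lemma rho_dm (r : Fin 3 → ℝ) (h : r 0 ^ 2 + r 1 ^ 2 + r 2 ^ 2 ≤ 1) :
    IsDensityMatrix (rho r) :=
  ⟨rho_psd r h, rho_trace r⟩

lemma dm_eq_rho (ρ : Matrix (Fin 2) (Fin 2) ℂ) (h : IsDensityMatrix ρ) :
    ∃ r : Fin 3 → ℝ, r 0 ^ 2 + r 1 ^ 2 + r 2 ^ 2 ≤ 1 ∧ ρ = rho r := by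
  obtain ⟨hpsd, htr⟩ := h
  have hherm := hpsd.isHermitian
  have h00 : (ρ 0 0).im = 0 := by
    have := congrFun (congrFun hherm 0) 0
    have h2 : -(ρ 0 0).im = (ρ 0 0).im := by
      simpa [Matrix.conjTranspose_apply, Complex.ext_iff] using this
    linarith
  have h11 : (ρ 1 1).im = 0 := by
    have := congrFun (congrFun hherm 1) 1
    have h2 : -(ρ 1 1).im = (ρ 1 1).im := by
      simpa [Matrix.conjTranspose_apply, Complex.ext_iff] using this
    linarith
  have h01 : ρ 0 1 = (starRingEnd ℂ) (ρ 1 0) := by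
    have := congrFun (congrFun hherm 0) 1
    simpa [Matrix.conjTranspose_apply] using this.symm
  have htrre : (ρ 0 0).re + (ρ 1 1).re = 1 := by
    have := congrArg Complex.re htr
    simpa [Matrix.trace_fin_two] using this
  set r : Fin 3 → ℝ := ![2 * (ρ 1 0).re, 2 * (ρ 1 0).im, (ρ 0 0).re - (ρ 1 1).re] with hr
  have heq : ρ = rho r := by
    ext i j
    fin_cases i <;> fin_cases j <;>
      simp [rho, Complex.ext_iff, h01, h00, h11, hr] <;>
      first
      | (constructor <;> linarith)
      | linarith
  refine ⟨r, ?_, heq⟩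
  have hdet : 0 ≤ (ρ.det).re := by
    rw [hherm.det_eq_prod_eigenvalues]
    rw [Fin.prod_univ_two]
    have e0 := hpsd.eigenvalues_nonneg 0
    have e1 := hpsd.eigenvalues_nonneg 1
    simp [Complex.mul_re]
    nlinarith [e0, e1]
  have hdetval : (ρ.det).re = (1 - (r 0 ^ 2 + r 1 ^ 2 + r 2 ^ 2)) / 4 := by
    rw [heq]
    simp [rho, Matrix.det_fin_two, Complex.mul_re, Complex.div_re, Complex.div_im,
      Complex.re_ofNat, Complex.im_ofNat, Complex.normSq, hr]
    ring
  rw [hdetval] at hdet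
  linarith

lemma mean_qObs (a0 : ℝ) (a : E3) (r : Fin 3 → ℝ) :
    mean (qObs a0 a) (rho r) = a0 + (a 0 * r 0 + a 1 * r 1 + a 2 * r 2) := by
  simp [mean, qObs, rho, pauli1, pauli2, pauli3, Matrix.trace_fin_two, Matrix.mul_apply,
    Fin.sum_univ_two, Matrix.one_apply]
  ring

set_option maxHeartbeats 1000000 in
lemma variance_qObs (a0 : ℝ) (a : E3) (r : Fin 3 → ℝ) :
    variance (qObs a0 a) (rho r)
      = (a 0 ^ 2 + a 1 ^ 2 + a 2 ^ 2) - (a 0 * r 0 + a 1 * r 1 + a 2 * r 2) ^ 2 := by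
  rw [variance, mean_qObs]
  simp [qObs, rho, pauli1, pauli2, pauli3, Matrix.trace_fin_two, Matrix.mul_apply,
    Fin.sum_univ_two, Matrix.one_apply]
  ring

lemma norm_sq_E3 (a : E3) : ‖a‖ ^ 2 = a 0 ^ 2 + a 1 ^ 2 + a 2 ^ 2 := by
  rw [EuclideanSpace.norm_eq, Real.sq_sqrt (by positivity)]
  simp [Fin.sum_univ_three, Real.norm_eq_abs, sq_abs]

/-- The matrix whose rows are the Bloch vectors. -/
def Mat (a b c : E3) : Matrix (Fin 3) (Fin 3) ℝ :=
  !![a 0, a 1, a 2; b 0, b 1, b 2; c 0, c 1, c 2]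

lemma gram_eq (a b c : E3) : gram ![a, b, c] = Mat a b c * (Mat a b c)ᵀ := by
  ext i j
  fin_cases i <;> fin_cases j <;>
    simp [_root_.gram, Mat, Matrix.mul_apply, Matrix.transpose_apply, Fin.sum_univ_three,
      PiLp.inner_apply, RCLike.inner_apply, Matrix.vecHead, Matrix.vecTail, mul_comm]

lemma mat_isUnit (a b c : E3) (habc : LinearIndependent ℝ ![a, b, c]) :
    IsUnit (Mat a b c) := by
  rw [← Matrix.linearIndependent_rows_iff_isUnit]
  have h2 := habc.map' (WithLp.linearEquiv 2 ℝ (Fin 3 → ℝ)).toLinearMap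
    (LinearEquiv.ker _)
  have : (fun i => Mat a b c i) =
      fun i => (WithLp.linearEquiv 2 ℝ (Fin 3 → ℝ)).toLinearMap (![a, b, c] i) := by
    funext i
    fin_cases i <;> (funext j; fin_cases j <;> simp [Mat])
  rw [show (Mat a b c).row = fun i => Mat a b c i from rfl, this]
  exact h2

lemma key_identity (M : Matrix (Fin 3) (Fin 3) ℝ) (hM : IsUnit M) (r : Fin 3 → ℝ) :
    (M *ᵥ r) ⬝ᵥ ((M * Mᵀ)⁻¹ *ᵥ (M *ᵥ r)) = r ⬝ᵥ r := by
  have hdet : IsUnit M.det := (Matrix.isUnit_iff_isUnit_det M).mp hM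
  rw [Matrix.mul_inv_rev, Matrix.mulVec_mulVec, Matrix.mul_assoc,
    Matrix.nonsing_inv_mul M hdet, Matrix.mul_one]
  rw [Matrix.dotProduct_mulVec]
  have : (M *ᵥ r) ᵥ* Mᵀ⁻¹ = r := by
    rw [← Matrix.transpose_nonsing_inv, Matrix.vecMul_transpose, Matrix.mulVec_mulVec,
      Matrix.nonsing_inv_mul M hdet, Matrix.one_mulVec]
  rw [this]

lemma cauchy3 (a0 a1 a2 r0 r1 r2 : ℝ) :
    (a0 * r0 + a1 * r1 + a2 * r2) ^ 2
      ≤ (a0 ^ 2 + a1 ^ 2 + a2 ^ 2) * (r0 ^ 2 + r1 ^ 2 + r2 ^ 2) := by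
  nlinarith [sq_nonneg (a0 * r1 - a1 * r0), sq_nonneg (a0 * r2 - a2 * r0),
    sq_nonneg (a1 * r2 - a2 * r1)]

lemma sign_helper (s t : ℝ) (hs : s = 1 ∨ s = -1) :
    (if 0 ≤ s * t then (1 : ℝ) else -1) * |t| = s * t := by
  rcases abs_cases t with ⟨h1, h2⟩ | ⟨h1, h2⟩ <;> rcases hs with rfl | rfl <;>
    split_ifs <;> nlinarith


set_option maxHeartbeats 1000000 in
/-- the uncertainty region of a triple of qubit observables with linearly
independent Bloch vectors. -/
theorem uncertainty_region_three_observables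
    (a0 b0 c0 : ℝ) (a b c : E3) (habc : LinearIndependent ℝ ![a, b, c]) :
    {p : ℝ × ℝ × ℝ | ∃ ρ : Matrix (Fin 2) (Fin 2) ℂ, IsDensityMatrix ρ ∧
        p = (uncertainty (qObs a0 a) ρ, uncertainty (qObs b0 b) ρ,
              uncertainty (qObs c0 c) ρ)} =
    {p : ℝ × ℝ × ℝ | ∃ εb εc : ℝ, (εb = 1 ∨ εb = -1) ∧ (εc = 1 ∨ εc = -1) ∧
        p.1 ∈ Set.Icc 0 ‖a‖ ∧ p.2.1 ∈ Set.Icc 0 ‖b‖ ∧ p.2.2 ∈ Set.Icc 0 ‖c‖ ∧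
        ![Real.sqrt (‖a‖ ^ 2 - p.1 ^ 2), εb * Real.sqrt (‖b‖ ^ 2 - p.2.1 ^ 2),
            εc * Real.sqrt (‖c‖ ^ 2 - p.2.2 ^ 2)] ⬝ᵥ
          ((gram ![a, b, c])⁻¹ *ᵥ
            ![Real.sqrt (‖a‖ ^ 2 - p.1 ^ 2), εb * Real.sqrt (‖b‖ ^ 2 - p.2.1 ^ 2),
              εc * Real.sqrt (‖c‖ ^ 2 - p.2.2 ^ 2)]) ≤ 1} := by
  have hM : IsUnit (Mat a b c) := mat_isUnit a b c habc
  have hdet : IsUnit (Mat a b c).det := (Matrix.isUnit_iff_isUnit_det _).mp hM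
  ext p
  simp only [Set.mem_setOf_eq]
  constructor
  · rintro ⟨ρ, hρ, rfl⟩
    obtain ⟨r, hr, rfl⟩ := dm_eq_rho ρ hρ
    dsimp only
    set ta := a 0 * r 0 + a 1 * r 1 + a 2 * r 2 with hta
    set tb := b 0 * r 0 + b 1 * r 1 + b 2 * r 2 with htb
    set tc := c 0 * r 0 + c 1 * r 1 + c 2 * r 2 with htc
    have haa : ta ^ 2 ≤ ‖a‖ ^ 2 := by
      rw [norm_sq_E3, hta]
      nlinarith [cauchy3 (a 0) (a 1) (a 2) (r 0) (r 1) (r 2), sq_nonneg (a 0),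
        sq_nonneg (a 1), sq_nonneg (a 2), hr]
    have hbb : tb ^ 2 ≤ ‖b‖ ^ 2 := by
      rw [norm_sq_E3, htb]
      nlinarith [cauchy3 (b 0) (b 1) (b 2) (r 0) (r 1) (r 2), sq_nonneg (b 0),
        sq_nonneg (b 1), sq_nonneg (b 2), hr]
    have hcc : tc ^ 2 ≤ ‖c‖ ^ 2 := by
      rw [norm_sq_E3, htc]
      nlinarith [cauchy3 (c 0) (c 1) (c 2) (r 0) (r 1) (r 2), sq_nonneg (c 0),
        sq_nonneg (c 1), sq_nonneg (c 2), hr]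
    have hua : uncertainty (qObs a0 a) (rho r) = Real.sqrt (‖a‖ ^ 2 - ta ^ 2) := by
      rw [uncertainty, variance_qObs, ← norm_sq_E3, hta]
    have hub : uncertainty (qObs b0 b) (rho r) = Real.sqrt (‖b‖ ^ 2 - tb ^ 2) := by
      rw [uncertainty, variance_qObs, ← norm_sq_E3, htb]
    have huc : uncertainty (qObs c0 c) (rho r) = Real.sqrt (‖c‖ ^ 2 - tc ^ 2) := by
      rw [uncertainty, variance_qObs, ← norm_sq_E3, htc]
    rw [hua, hub, huc]
    have h1 : Real.sqrt (‖a‖ ^ 2 - Real.sqrt (‖a‖ ^ 2 - ta ^ 2) ^ 2) = |ta| := by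
      rw [Real.sq_sqrt (by linarith), show ‖a‖ ^ 2 - (‖a‖ ^ 2 - ta ^ 2) = ta ^ 2 by ring,
        Real.sqrt_sq_eq_abs]
    have h2 : Real.sqrt (‖b‖ ^ 2 - Real.sqrt (‖b‖ ^ 2 - tb ^ 2) ^ 2) = |tb| := by
      rw [Real.sq_sqrt (by linarith), show ‖b‖ ^ 2 - (‖b‖ ^ 2 - tb ^ 2) = tb ^ 2 by ring,
        Real.sqrt_sq_eq_abs]
    have h3 : Real.sqrt (‖c‖ ^ 2 - Real.sqrt (‖c‖ ^ 2 - tc ^ 2) ^ 2) = |tc| := by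
      rw [Real.sq_sqrt (by linarith), show ‖c‖ ^ 2 - (‖c‖ ^ 2 - tc ^ 2) = tc ^ 2 by ring,
        Real.sqrt_sq_eq_abs]
    obtain ⟨s, hs, e0⟩ : ∃ s : ℝ, (s = 1 ∨ s = -1) ∧ |ta| = s * ta := by
      rcases le_or_gt 0 ta with h | h
      · exact ⟨1, Or.inl rfl, by rw [abs_of_nonneg h]; ring⟩
      · exact ⟨-1, Or.inr rfl, by rw [abs_of_neg h]; ring⟩
    refine ⟨if 0 ≤ s * tb then 1 else -1, if 0 ≤ s * tc then 1 else -1,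
      (by split_ifs <;> simp), (by split_ifs <;> simp), ?_, ?_, ?_, ?_⟩
    · refine ⟨Real.sqrt_nonneg _, ?_⟩
      calc Real.sqrt (‖a‖ ^ 2 - ta ^ 2) ≤ Real.sqrt (‖a‖ ^ 2) :=
            Real.sqrt_le_sqrt (by nlinarith [sq_nonneg ta])
        _ = ‖a‖ := Real.sqrt_sq (norm_nonneg a)
    · refine ⟨Real.sqrt_nonneg _, ?_⟩
      calc Real.sqrt (‖b‖ ^ 2 - tb ^ 2) ≤ Real.sqrt (‖b‖ ^ 2) :=
            Real.sqrt_le_sqrt (by nlinarith [sq_nonneg tb])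
        _ = ‖b‖ := Real.sqrt_sq (norm_nonneg b)
    · refine ⟨Real.sqrt_nonneg _, ?_⟩
      calc Real.sqrt (‖c‖ ^ 2 - tc ^ 2) ≤ Real.sqrt (‖c‖ ^ 2) :=
            Real.sqrt_le_sqrt (by nlinarith [sq_nonneg tc])
        _ = ‖c‖ := Real.sqrt_sq (norm_nonneg c)
    · rw [h1, h2, h3]
      have hvec : Mat a b c *ᵥ r = ![ta, tb, tc] := by
        funext i
        fin_cases i <;>
          simp [Mat, Matrix.mulVec, dotProduct, Fin.sum_univ_three, hta, htb, htc]
      have hu : ![|ta|, (if 0 ≤ s * tb then (1 : ℝ) else -1) * |tb|,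
          (if 0 ≤ s * tc then (1 : ℝ) else -1) * |tc|] = s • ![ta, tb, tc] := by
        have e1 : (if 0 ≤ s * tb then (1 : ℝ) else -1) * |tb| = s * tb :=
          sign_helper s tb hs
        have e2 : (if 0 ≤ s * tc then (1 : ℝ) else -1) * |tc| = s * tc :=
          sign_helper s tc hs
        funext i
        fin_cases i <;>
          simp only [Matrix.cons_val_zero, Matrix.cons_val_one, Matrix.head_cons,
            Matrix.cons_val_two, Matrix.tail_cons, Pi.smul_apply, smul_eq_mul, Fin.isValue,
            e0, e1, e2] <;> rfl
      rw [hu, gram_eq, ← hvec]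
      have hsmul : (s • (Mat a b c *ᵥ r)) ⬝ᵥ
            ((Mat a b c * (Mat a b c)ᵀ)⁻¹ *ᵥ (s • (Mat a b c *ᵥ r)))
          = (s * s) * ((Mat a b c *ᵥ r) ⬝ᵥ
            ((Mat a b c * (Mat a b c)ᵀ)⁻¹ *ᵥ (Mat a b c *ᵥ r))) := by
        rw [Matrix.mulVec_smul, smul_dotProduct, dotProduct_smul,
          smul_eq_mul, smul_eq_mul]
        ring
      rw [hsmul, key_identity _ hM r]
      have hss : s * s = 1 := by rcases hs with rfl | rfl <;> norm_num
      rw [hss, one_mul]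
      have : r ⬝ᵥ r = r 0 ^ 2 + r 1 ^ 2 + r 2 ^ 2 := by
        simp [dotProduct, Fin.sum_univ_three]
        ring
      rw [this]
      exact hr
  · rintro ⟨εb, εc, hεb, hεc, ⟨hx0, hx1⟩, ⟨hy0, hy1⟩, ⟨hz0, hz1⟩, hq⟩
    set x := p.1 with hx
    set y := p.2.1 with hy
    set z := p.2.2 with hz
    have hx2 : x ^ 2 ≤ ‖a‖ ^ 2 := pow_le_pow_left₀ hx0 hx1 2
    have hy2 : y ^ 2 ≤ ‖b‖ ^ 2 := pow_le_pow_left₀ hy0 hy1 2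
    have hz2 : z ^ 2 ≤ ‖c‖ ^ 2 := pow_le_pow_left₀ hz0 hz1 2
    set u : Fin 3 → ℝ := ![Real.sqrt (‖a‖ ^ 2 - x ^ 2), εb * Real.sqrt (‖b‖ ^ 2 - y ^ 2),
      εc * Real.sqrt (‖c‖ ^ 2 - z ^ 2)] with hudef
    set r : Fin 3 → ℝ := (Mat a b c)⁻¹ *ᵥ u with hrdef
    have hMr : Mat a b c *ᵥ r = u := by
      rw [hrdef, Matrix.mulVec_mulVec, Matrix.mul_nonsing_inv _ hdet, Matrix.one_mulVec]
    have hkey := key_identity (Mat a b c) hM r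
    rw [hMr] at hkey
    rw [gram_eq] at hq
    have hrr : r 0 ^ 2 + r 1 ^ 2 + r 2 ^ 2 ≤ 1 := by
      have hdd : r ⬝ᵥ r = r 0 ^ 2 + r 1 ^ 2 + r 2 ^ 2 := by
        simp [dotProduct, Fin.sum_univ_three]
        ring
      rw [← hdd, ← hkey]
      exact hq
    refine ⟨rho r, rho_dm r hrr, ?_⟩
    have ht0 : a 0 * r 0 + a 1 * r 1 + a 2 * r 2 = Real.sqrt (‖a‖ ^ 2 - x ^ 2) := by
      have := congrFun hMr 0
      simpa [Mat, Matrix.mulVec, dotProduct, Fin.sum_univ_three, hudef] using this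
    have ht1 : b 0 * r 0 + b 1 * r 1 + b 2 * r 2 = εb * Real.sqrt (‖b‖ ^ 2 - y ^ 2) := by
      have := congrFun hMr 1
      simpa [Mat, Matrix.mulVec, dotProduct, Fin.sum_univ_three, hudef] using this
    have ht2 : c 0 * r 0 + c 1 * r 1 + c 2 * r 2 = εc * Real.sqrt (‖c‖ ^ 2 - z ^ 2) := by
      have := congrFun hMr 2
      simpa [Mat, Matrix.mulVec, dotProduct, Fin.sum_univ_three, hudef] using this
    have hεb2 : εb ^ 2 = 1 := by rcases hεb with rfl | rfl <;> norm_num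
    have hεc2 : εc ^ 2 = 1 := by rcases hεc with rfl | rfl <;> norm_num
    have ha : uncertainty (qObs a0 a) (rho r) = x := by
      rw [uncertainty, variance_qObs, ← norm_sq_E3, ht0,
        Real.sq_sqrt (by linarith),
        show ‖a‖ ^ 2 - (‖a‖ ^ 2 - x ^ 2) = x ^ 2 by ring, Real.sqrt_sq hx0]
    have hb : uncertainty (qObs b0 b) (rho r) = y := by
      rw [uncertainty, variance_qObs, ← norm_sq_E3, ht1, mul_pow, hεb2, one_mul,
        Real.sq_sqrt (by linarith),
        show ‖b‖ ^ 2 - (‖b‖ ^ 2 - y ^ 2) = y ^ 2 by ring, Real.sqrt_sq hy0]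
    have hc : uncertainty (qObs c0 c) (rho r) = z := by
      rw [uncertainty, variance_qObs, ← norm_sq_E3, ht2, mul_pow, hεc2, one_mul,
        Real.sq_sqrt (by linarith),
        show ‖c‖ ^ 2 - (‖c‖ ^ 2 - z ^ 2) = z ^ 2 by ring, Real.sqrt_sq hz0]
    rw [ha, hb, hc, hx, hy, hz]

end
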